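/- Let M be the Gram-type matrix on external lines with rows M_ℓ = (q²+1)χ_ℓ + χ_{ℓ^⊥}, where ℓ^⊥ is the set of external lines concurrent with ℓ. Then for every external line ℓ with antipode ℓ̄, the vector χ_ℓ + χ_{ℓ̄} lies in the row space of M over ℚ. -/

import Mathlib

structure GenQuad (P L : Type*) (I : P → L → Prop) (s t : ℕ) : Prop where
  unique_line : ∀ ⦃p q : P⦄, p ≠ q → ∀ ⦃l m : L⦄, I p l → I q l → I p m → I q m → l = m
  point_lines : ∀ p : P, {l : L | I p l}.ncard = t + 1
  line_points : ∀ l : L, {p : P | I p l}.ncard = s + 1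
  gq : ∀ (p : P) (l : L), ¬ I p l → ∃! r : P, I r l ∧ ∃ m : L, I p m ∧ I r m

def Concurrent {P L : Type*} (I : P → L → Prop) (k l : L) : Prop :=
  k ≠ l ∧ ∃ p : P, I p k ∧ I p l

open scoped Classical

set_option linter.unusedSectionVars false

namespace GenQuad

variable {P L : Type*} {I : P → L → Prop} {s t : ℕ}

theorem pt_unique (h : GenQuad P L I s t) {l m : L} (hlm : l ≠ m) {a b : P}
    (h1 : I a l) (h2 : I a m) (h3 : I b l) (h4 : I b m) : a = b := by
  by_contra hab
  exact hlm (h.unique_line hab h1 h3 h2 h4)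

theorem center_unique (h : GenQuad P L I s t) {p : P} {l : L} (hpl : ¬ I p l)
    {a b : P} (hal : I a l) (hbl : I b l) {m m' : L} (ham : I a m) (hpm : I p m)
    (hbm' : I b m') (hpm' : I p m') : a = b := by
  obtain ⟨r, _, hu⟩ := h.gq p l hpl
  rw [hu a ⟨hal, m, hpm, ham⟩, hu b ⟨hbl, m', hpm', hbm'⟩]

theorem dual (h : GenQuad P L I s t) : GenQuad L P (fun l p => I p l) t s where
  unique_line := fun l m hlm p r h1 h2 h3 h4 => h.pt_unique hlm h1 h2 h3 h4
  point_lines := h.line_points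
  line_points := h.point_lines
  gq := by
    intro k x hxk
    obtain ⟨rp, ⟨hrk, m, hxm, hrm⟩, hu⟩ := h.gq x k hxk
    refine ⟨m, ⟨hxm, rp, hrk, hrm⟩, ?_⟩
    rintro m' ⟨hxm', y, hyk, hym'⟩
    have hy : y = rp := hu y ⟨hyk, m', hxm', hym'⟩
    subst hy
    have hxr : x ≠ y := fun e => hxk (e ▸ hyk)
    exact h.unique_line hxr hxm' hym' hxm hrm

variable [Fintype P] [Fintype L]

/-- Finset of points on a line. -/
noncomputable def pts (I : P → L → Prop) (l : L) [Fintype P] : Finset P :=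
  Finset.univ.filter (fun p => I p l)

noncomputable def pencil (I : P → L → Prop) (p : P) [Fintype L] : Finset L :=
  Finset.univ.filter (fun l => I p l)

@[simp] theorem mem_pts {l : L} {p : P} : p ∈ pts I l ↔ I p l := by
  simp [pts]

@[simp] theorem mem_pencil {l : L} {p : P} : l ∈ pencil I p ↔ I p l := by
  simp [pencil]

theorem card_pts (h : GenQuad P L I s t) (l : L) : (pts I l).card = s + 1 := by
  have := h.line_points l
  rwa [Set.ncard_eq_toFinset_card', Set.toFinset_setOf] at this

theorem card_pencil (h : GenQuad P L I s t) (p : P) : (pencil I p).card = t + 1 := by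
  have := h.point_lines p
  rwa [Set.ncard_eq_toFinset_card', Set.toFinset_setOf] at this

theorem card_points (h : GenQuad P L I s t) (l0 : L) :
    Fintype.card P = (s + 1) * (s * t + 1) := by
  classical
  set T : P → Finset P := fun x => Finset.univ.filter
    (fun p => ¬ I p l0 ∧ ∃ m, I p m ∧ I x m) with hT
  have hTmem : ∀ x p, p ∈ T x ↔ (¬ I p l0 ∧ ∃ m, I p m ∧ I x m) := by
    intro x p; simp [hT]
  have hdisj : ∀ x ∈ pts I l0, ∀ y ∈ pts I l0, x ≠ y → Disjoint (T x) (T y) := by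
    intro x hx y hy hxy
    rw [Finset.disjoint_left]
    intro p hp hp'
    rw [hTmem] at hp hp'
    obtain ⟨hpl, m, hpm, hxm⟩ := hp
    obtain ⟨-, m', hpm', hym'⟩ := hp'
    rw [mem_pts] at hx hy
    exact hxy (h.center_unique hpl hx hy hxm hpm hym' hpm')
  have hcover : Finset.univ = pts I l0 ∪ (pts I l0).biUnion T := by
    apply Finset.ext
    intro p
    simp only [Finset.mem_univ, true_iff, Finset.mem_union, Finset.mem_biUnion]
    by_cases hp : I p l0
    · exact Or.inl (mem_pts.2 hp)
    · obtain ⟨r, ⟨hrl, m, hpm, hrm⟩, -⟩ := h.gq p l0 hp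
      exact Or.inr ⟨r, mem_pts.2 hrl, (hTmem r p).2 ⟨hp, m, hpm, hrm⟩⟩
  have hdisj2 : Disjoint (pts I l0) ((pts I l0).biUnion T) := by
    rw [Finset.disjoint_left]
    intro p hp hp'
    rw [Finset.mem_biUnion] at hp'
    obtain ⟨x, -, hpx⟩ := hp'
    exact ((hTmem x p).1 hpx).1 (mem_pts.1 hp)
  have hcardT : ∀ x ∈ pts I l0, (T x).card = s * t := by
    intro x hx
    rw [mem_pts] at hx
    have hTeq : T x = ((pencil I x).erase l0).biUnion (fun m => (pts I m).erase x) := by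
      apply Finset.ext
      intro p
      rw [hTmem, Finset.mem_biUnion]
      constructor
      · rintro ⟨hpl, m, hpm, hxm⟩
        refine ⟨m, Finset.mem_erase.2 ⟨fun e => hpl (e ▸ hpm), mem_pencil.2 hxm⟩,
          Finset.mem_erase.2 ⟨fun e => hpl (e ▸ hx), mem_pts.2 hpm⟩⟩
      · rintro ⟨m, hm, hp⟩
        rw [Finset.mem_erase, mem_pencil] at hm
        rw [Finset.mem_erase, mem_pts] at hp
        refine ⟨fun hpl => hm.1 (h.unique_line hp.1 hp.2 hm.2 hpl hx), m, hp.2, hm.2⟩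
    have hdisjm : ∀ m ∈ (pencil I x).erase l0, ∀ m' ∈ (pencil I x).erase l0,
        m ≠ m' → Disjoint ((pts I m).erase x) ((pts I m').erase x) := by
      intro m hm m' hm' hmm'
      rw [Finset.mem_erase, mem_pencil] at hm hm'
      rw [Finset.disjoint_left]
      intro p hp hp'
      rw [Finset.mem_erase, mem_pts] at hp hp'
      exact hmm' (h.unique_line hp.1 hp.2 hm.2 hp'.2 hm'.2)
    rw [hTeq, Finset.card_biUnion hdisjm]
    have hinner : ∀ m ∈ (pencil I x).erase l0, ((pts I m).erase x).card = s := by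
      intro m hm
      rw [Finset.mem_erase, mem_pencil] at hm
      rw [Finset.card_erase_of_mem (mem_pts.2 hm.2), h.card_pts m]
      simp
    rw [Finset.sum_congr rfl hinner, Finset.sum_const,
      Finset.card_erase_of_mem (mem_pencil.2 hx), h.card_pencil x, smul_eq_mul]
    simp [mul_comm]
  rw [← Finset.card_univ, hcover, Finset.card_union_of_disjoint hdisj2,
    Finset.card_biUnion hdisj, Finset.sum_congr rfl hcardT, Finset.sum_const,
    h.card_pts l0, smul_eq_mul]
  ring

end GenQuad

section helpers
variable {P : Type*} [Fintype P]
open scoped Classical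

lemma card_subtype_filter (P' : Set P) (pred : P → Prop) :
    (Finset.univ.filter (fun p : ↥P' => pred p.1)).card =
      (Finset.univ.filter (fun p : P => p ∈ P' ∧ pred p)).card := by
  classical
  rw [← Fintype.card_subtype, ← Fintype.card_subtype]
  exact Fintype.card_congr (Equiv.subtypeSubtypeEquivSubtypeInter _ _)

lemma card_filter_eq_ite {α : Type*} [DecidableEq α] (s : Finset α) (b : α)
    [DecidablePred (fun x : α => x = b)] :
    (s.filter (fun x => x = b)).card = if b ∈ s then 1 else 0 := by
  classical
  split_ifs with h
  · rw [Finset.card_eq_one]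
    refine ⟨b, ?_⟩
    apply Finset.ext
    intro x
    simp only [Finset.mem_filter, Finset.mem_singleton]
    constructor
    · rintro ⟨-, rfl⟩; rfl
    · rintro rfl; exact ⟨h, rfl⟩
  · rw [Finset.card_eq_zero]
    apply Finset.eq_empty_of_forall_notMem
    intro x hx
    rw [Finset.mem_filter] at hx
    exact h (hx.2 ▸ hx.1)

end helpers

lemma conc_symm {P L : Type*} {I : P → L → Prop} {k l : L}
    (h : Concurrent I k l) : Concurrent I l k :=
  ⟨h.1.symm, h.2.imp (fun _ hp => ⟨hp.2, hp.1⟩)⟩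

structure Ctx (P L : Type*) [Fintype P] [Fintype L] where
  I : P → L → Prop
  q : ℕ
  hq : 2 ≤ q
  hGQ : GenQuad P L I (q ^ 2) q
  P' : Set P
  L' : Set L
  hPne : P'.Nonempty
  hsub : GenQuad P' L' (fun p l => I p.1 l.1) q q
  hlines : ∀ p ∈ P', ∀ l, I p l → l ∈ L'
  σP : P ≃ P
  σL : L ≃ L
  hσI : ∀ p l, I p l ↔ I (σP p) (σL l)
  hσP2 : ∀ p, σP (σP p) = p
  hσL2 : ∀ l, σL (σL l) = l
  hσfix : ∀ p ∈ P', σP p = p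
  hσmove : ∀ l, (∀ p ∈ P', ¬ I p l) → σL l ≠ l

namespace Ctx

open scoped Classical
open GenQuad Finset

variable {P L : Type*} [Fintype P] [Fintype L] (S : Ctx P L)

/-- external line -/
@[reducible] def Ext (l : L) : Prop := ∀ p ∈ S.P', ¬ S.I p l

lemma dichotomy (l : L) : l ∈ S.L' ∨ S.Ext l := by
  by_cases h : S.Ext l
  · exact Or.inr h
  · left
    simp only [Ext, not_forall] at h
    obtain ⟨p, hp, hIl⟩ := h
    exact S.hlines p hp l (not_not.1 hIl)

/-- points of `P'` on a line of `L'`, counted inside P -/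
lemma card_ptsP' {l : L} (hl : l ∈ S.L') :
    (Finset.univ.filter (fun p : P => p ∈ S.P' ∧ S.I p l)).card = S.q + 1 := by
  have h := S.hsub.card_pts (⟨l, hl⟩ : ↥S.L')
  rw [pts] at h
  rw [← card_subtype_filter S.P' (fun p => S.I p l)]
  exact h

lemma L'_not_ext {l : L} (hl : l ∈ S.L') : ¬ S.Ext l := by
  intro hext
  have h := S.card_ptsP' hl
  have : 0 < (Finset.univ.filter (fun p : P => p ∈ S.P' ∧ S.I p l)).card := by omega
  obtain ⟨p, hp⟩ := Finset.card_pos.1 this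
  rw [Finset.mem_filter] at hp
  exact hext p hp.2.1 hp.2.2

lemma ext_not_L' {l : L} (hl : S.Ext l) : l ∉ S.L' := fun h => S.L'_not_ext h hl

lemma exists_L0 : ∃ l : L, l ∈ S.L' := by
  obtain ⟨p0, hp0⟩ := S.hPne
  have h := S.hsub.card_pencil (⟨p0, hp0⟩ : ↥S.P')
  have : 0 < (pencil (fun (p : ↥S.P') (l : ↥S.L') => S.I p.1 l.1) ⟨p0, hp0⟩).card := by omega
  obtain ⟨l, -⟩ := Finset.card_pos.1 this
  exact ⟨l.1, l.2⟩

lemma card_P : Fintype.card P = (S.q ^ 2 + 1) * (S.q ^ 3 + 1) := by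
  obtain ⟨l0, -⟩ := S.exists_L0
  have h := S.hGQ.card_points l0
  rw [h]; ring_nf

lemma card_L : Fintype.card L = (S.q + 1) * (S.q ^ 3 + 1) := by
  obtain ⟨l0, -⟩ := S.exists_L0
  obtain ⟨p0, hp0⟩ := S.hPne
  have h := S.hGQ.dual.card_points p0
  rw [h]; ring_nf

lemma card_P' : Fintype.card ↥S.P' = (S.q + 1) * (S.q ^ 2 + 1) := by
  obtain ⟨l0, hl0⟩ := S.exists_L0
  have h := S.hsub.card_points (⟨l0, hl0⟩ : ↥S.L')
  rw [h]; ring_nf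

lemma card_L' : Fintype.card ↥S.L' = (S.q + 1) * (S.q ^ 2 + 1) := by
  obtain ⟨p0, hp0⟩ := S.hPne
  have h := S.hsub.dual.card_points (⟨p0, hp0⟩ : ↥S.P')
  rw [h]; ring_nf

/-- every line of L' is fixed by σL -/
lemma sigma_fix_L' {l : L} (hl : l ∈ S.L') : S.σL l = l := by
  by_contra hne
  have h := S.card_ptsP' hl
  have h2 : 1 < (Finset.univ.filter (fun p : P => p ∈ S.P' ∧ S.I p l)).card := by
    have := S.hq; omega
  obtain ⟨a, ha, b, hb, hab⟩ := Finset.one_lt_card.1 h2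
  rw [Finset.mem_filter] at ha hb
  have hIa : S.I a (S.σL l) := by
    have := (S.hσI a l).1 ha.2.2
    rwa [S.hσfix a ha.2.1] at this
  have hIb : S.I b (S.σL l) := by
    have := (S.hσI b l).1 hb.2.2
    rwa [S.hσfix b hb.2.1] at this
  exact hne (S.hGQ.unique_line hab hIa hIb ha.2.2 hb.2.2)

lemma ext_sigma {l : L} (hl : S.Ext l) : S.Ext (S.σL l) := by
  intro p hp hI
  have := (S.hσI p (S.σL l)).1 hI
  rw [S.hσfix p hp, S.hσL2 l] at this
  exact hl p hp this

lemma sigma_pt {x : P} {l : L} (h : S.I x l) : S.I (S.σP x) (S.σL l) :=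
  (S.hσI x l).1 h

/-- at most one line of L' through a point outside P' -/
lemma L'_line_unique {x : P} (hx : x ∉ S.P') {l1 l2 : L} (h1 : l1 ∈ S.L')
    (h2 : l2 ∈ S.L') (hI1 : S.I x l1) (hI2 : S.I x l2) : l1 = l2 := by
  by_contra h12
  -- a point of P' on l1
  have hc := S.card_ptsP' h1
  have : 0 < (Finset.univ.filter (fun p : P => p ∈ S.P' ∧ S.I p l1)).card := by omega
  obtain ⟨p1, hp1⟩ := Finset.card_pos.1 this
  rw [Finset.mem_filter] at hp1
  obtain ⟨-, hp1P, hp1l⟩ := hp1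
  have hp1x : p1 ≠ x := fun e => hx (e ▸ hp1P)
  have hp1l2 : ¬ S.I p1 l2 := by
    intro hc2
    exact h12 (S.hGQ.unique_line hp1x hp1l hI1 hc2 hI2)
  -- subquadrangle axiom
  obtain ⟨r, ⟨hrl2, m, hpm, hrm⟩, -⟩ :=
    S.hsub.gq ⟨p1, hp1P⟩ ⟨l2, h2⟩ hp1l2
  have : x = r.1 := S.hGQ.center_unique hp1l2 hI2 hrl2 hI1 hp1l hrm hpm
  exact hx (this ▸ r.2)

/-- counting: every point outside P' lies on at least one line of L' -/
lemma L'_line_exists {x : P} (hx : x ∉ S.P') : ∃ l ∈ S.L', S.I x l := by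
  classical
  set LF : Finset L := Finset.univ.filter (· ∈ S.L') with hLF
  set W : L → Finset P := fun l => Finset.univ.filter (fun y : P => y ∉ S.P' ∧ S.I y l) with hW
  set B : Finset P := Finset.univ.filter (· ∉ S.P') with hB
  have hq := S.hq
  -- card of W l for l ∈ L'
  have hcardW : ∀ l ∈ LF, (W l).card = S.q ^ 2 - S.q := by
    intro l hl
    rw [hLF, Finset.mem_filter] at hl
    have hsplit : (pts S.I l).card =
        (Finset.univ.filter (fun p : P => p ∈ S.P' ∧ S.I p l)).card + (W l).card := by
      rw [← Finset.card_union_of_disjoint]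
      · congr 1
        apply Finset.ext
        intro p
        simp only [mem_pts, Finset.mem_union, Finset.mem_filter, Finset.mem_univ, true_and, hW]
        by_cases hp : p ∈ S.P' <;> tauto
      · rw [Finset.disjoint_left]
        intro p hp hp'
        rw [Finset.mem_filter] at hp
        rw [hW, Finset.mem_filter] at hp'
        exact hp'.2.1 hp.2.1
    rw [S.hGQ.card_pts l, S.card_ptsP' hl.2] at hsplit
    omega
  -- disjointness
  have hdisj : ∀ l1 ∈ LF, ∀ l2 ∈ LF, l1 ≠ l2 → Disjoint (W l1) (W l2) := by
    intro l1 h1 l2 h2 h12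
    rw [hLF, Finset.mem_filter] at h1 h2
    rw [Finset.disjoint_left]
    intro p hp hp'
    rw [hW, Finset.mem_filter] at hp hp'
    exact h12 (S.L'_line_unique hp.2.1 h1.2 h2.2 hp.2.2 hp'.2.2)
  have hsub : LF.biUnion W ⊆ B := by
    intro p hp
    rw [Finset.mem_biUnion] at hp
    obtain ⟨l, -, hpl⟩ := hp
    rw [hW, Finset.mem_filter] at hpl
    rw [hB, Finset.mem_filter]
    exact ⟨Finset.mem_univ p, hpl.2.1⟩
  have hcardLF : LF.card = (S.q + 1) * (S.q ^ 2 + 1) := by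
    rw [hLF, ← Fintype.card_subtype]
    exact S.card_L'
  have hcardB : B.card + (S.q + 1) * (S.q ^ 2 + 1) = Fintype.card P := by
    have h1 : B.card + (Finset.univ.filter (· ∈ S.P')).card = Fintype.card P := by
      rw [hB, ← Finset.card_univ, ← Finset.card_filter_add_card_filter_not
        (p := (· ∈ S.P')) (s := Finset.univ), add_comm]
    have h2 : (Finset.univ.filter (· ∈ S.P')).card = (S.q + 1) * (S.q ^ 2 + 1) := by
      rw [← Fintype.card_subtype]; exact S.card_P'
    omega
  have hcardBi : (LF.biUnion W).card = B.card := by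
    rw [Finset.card_biUnion hdisj, Finset.sum_congr rfl hcardW, Finset.sum_const,
      hcardLF, smul_eq_mul]
    have : (S.q + 1) * (S.q ^ 2 + 1) * (S.q ^ 2 - S.q) + (S.q + 1) * (S.q ^ 2 + 1)
        = Fintype.card P := by
      rw [S.card_P]
      have h2 : S.q ^ 2 - S.q + 1 = S.q ^ 2 - S.q + 1 := rfl
      nlinarith [Nat.sub_add_cancel (by nlinarith : S.q ≤ S.q ^ 2)]
    omega
  have heq : LF.biUnion W = B := Finset.eq_of_subset_of_card_le hsub (le_of_eq hcardBi.symm)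
  have hxB : x ∈ B := by rw [hB, Finset.mem_filter]; exact ⟨Finset.mem_univ x, hx⟩
  rw [← heq, Finset.mem_biUnion] at hxB
  obtain ⟨l, hl, hxl⟩ := hxB
  rw [hLF, Finset.mem_filter] at hl
  rw [hW, Finset.mem_filter] at hxl
  exact ⟨l, hl.2, hxl.2.2⟩

/-- the unique line of L' through a point outside P' -/
noncomputable def lin (x : P) : L :=
  if hx : x ∉ S.P' then (S.L'_line_exists hx).choose
  else S.exists_L0.choose

lemma lin_mem {x : P} (hx : x ∉ S.P') : S.lin x ∈ S.L' := by
  rw [lin, dif_pos hx]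
  exact (S.L'_line_exists hx).choose_spec.1

lemma lin_inc {x : P} (hx : x ∉ S.P') : S.I x (S.lin x) := by
  rw [lin, dif_pos hx]
  exact (S.L'_line_exists hx).choose_spec.2

lemma lin_eq {x : P} (hx : x ∉ S.P') {l : L} (hl : l ∈ S.L') (hI : S.I x l) :
    l = S.lin x :=
  S.L'_line_unique hx hl (S.lin_mem hx) hI (S.lin_inc hx)

lemma lin_not_ext {x : P} (hx : x ∉ S.P') : ¬ S.Ext (S.lin x) :=
  S.L'_not_ext (S.lin_mem hx)

lemma ext_pt_not_P' {x : P} {l : L} (hl : S.Ext l) (hx : S.I x l) : x ∉ S.P' :=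
  fun hP => hl x hP hx

/-- spread property: lin x also passes through σP x -/
lemma lin_sigma {x : P} (hx : x ∉ S.P') : S.I (S.σP x) (S.lin x) := by
  have h := S.sigma_pt (S.lin_inc hx)
  rwa [S.sigma_fix_L' (S.lin_mem hx)] at h

/-- two distinct points on an external line -/
lemma ext_two_pts {l : L} {x : P} (hx : S.I x l) : ∃ y, S.I y l ∧ y ≠ x := by
  have h := S.hGQ.card_pts l
  have h2 : 1 < (pts S.I l).card := by have := S.hq; nlinarith
  obtain ⟨a, ha, b, hb, hab⟩ := Finset.one_lt_card.1 h2
  rw [mem_pts] at ha hb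
  by_cases hax : a = x
  · exact ⟨b, hb, fun e => hab (by rw [hax, e])⟩
  · exact ⟨a, ha, hax⟩

/-- L3 : an external line is not concurrent with its antipode -/
lemma antipode_not_conc {k : L} (hk : S.Ext k) : ¬ Concurrent S.I k (S.σL k) := by
  rintro ⟨hne, x, hxk, hxσ⟩
  obtain ⟨y, hyk, hyx⟩ := S.ext_two_pts hxk
  have hyP : y ∉ S.P' := S.ext_pt_not_P' hk hyk
  have hσy : S.I (S.σP y) (S.σL k) := S.sigma_pt hyk
  -- σ y ≠ y
  have hyσ : S.σP y ≠ y := by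
    intro e
    have : S.I y (S.σL k) := e ▸ hσy
    exact hne (S.hGQ.unique_line hyx hyk hxk this hxσ)
  have hxlin : ¬ S.I x (S.lin y) := by
    intro hc
    have : S.lin y = k := S.hGQ.unique_line hyx (S.lin_inc hyP) hc hyk hxk
    exact S.ext_not_L' hk (this ▸ S.lin_mem hyP)
  have : y = S.σP y := S.hGQ.center_unique hxlin (S.lin_inc hyP)
    (S.lin_sigma hyP) hyk hxk hσy hxσ
  exact hyσ this.symm

/-- L4: no external line is concurrent with both k and its antipode -/
lemma no_common_perp {k m : L} (hk : S.Ext k) (hm : S.Ext m)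
    (h1 : Concurrent S.I k m) (h2 : Concurrent S.I (S.σL k) m) : False := by
  obtain ⟨hkm, u, huk, hum⟩ := h1
  obtain ⟨hσm, v, hvσ, hvm⟩ := h2
  have hkσ : k ≠ S.σL k := (S.hσmove k hk).symm
  have huv : u ≠ v := by
    rintro rfl
    exact S.antipode_not_conc hk ⟨hkσ, u, huk, hvσ⟩
  have huP : u ∉ S.P' := S.ext_pt_not_P' hk huk
  have hσu : S.I (S.σP u) (S.σL k) := S.sigma_pt huk
  have huσu : u ≠ S.σP u := by
    intro e
    exact S.antipode_not_conc hk ⟨hkσ, u, huk, e ▸ hσu⟩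
  have hvσu : v ≠ S.σP u := by
    rintro rfl
    exact S.ext_not_L' hm
      ((S.hGQ.unique_line huσu (S.lin_inc huP) (S.lin_sigma huP) hum hvm) ▸ S.lin_mem huP)
  have hvlin : ¬ S.I v (S.lin u) := by
    intro hc
    exact S.ext_not_L' hm
      ((S.hGQ.unique_line huv (S.lin_inc huP) hc hum hvm) ▸ S.lin_mem huP)
  exact huσu (S.hGQ.center_unique hvlin (S.lin_inc huP) (S.lin_sigma huP)
    hum hvm hσu hvσ)

/-- three pairwise concurrent lines share a common point -/
lemma tri_common {c c' k : L} (h1 : Concurrent S.I c c') (h2 : Concurrent S.I c k)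
    (h3 : Concurrent S.I c' k) : ∃ z, S.I z c ∧ S.I z c' ∧ S.I z k := by
  obtain ⟨-, p, hpc, hpc'⟩ := h1
  obtain ⟨-, a, hac, hak⟩ := h2
  obtain ⟨-, b, hbc', hbk⟩ := h3
  by_cases hpk : S.I p k
  · exact ⟨p, hpc, hpc', hpk⟩
  · have hab : a = b := S.hGQ.center_unique hpk hak hbk hac hpc hbc' hpc'
    exact ⟨a, hac, hab ▸ hbc', hak⟩

/-- the set of external lines concurrent with a given external line has
`(q-1)(q^2+1)` elements -/
lemma card_perp_ext {n : L} (hn : S.Ext n) :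
    (Finset.univ.filter (fun m => S.Ext m ∧ Concurrent S.I n m)).card
      = (S.q - 1) * (S.q ^ 2 + 1) := by
  classical
  have key : Finset.univ.filter (fun m => S.Ext m ∧ Concurrent S.I n m) =
      (pts S.I n).biUnion (fun x => ((pencil S.I x).erase n).erase (S.lin x)) := by
    apply Finset.ext
    intro m
    rw [Finset.mem_filter, Finset.mem_biUnion]
    constructor
    · rintro ⟨-, hm, hnm, x, hxn, hxm⟩
      refine ⟨x, mem_pts.2 hxn, ?_⟩
      rw [Finset.mem_erase, Finset.mem_erase, mem_pencil]
      refine ⟨?_, fun e => hnm (e ▸ rfl), hxm⟩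
      intro e
      exact S.ext_not_L' hm (e ▸ S.lin_mem (S.ext_pt_not_P' hn hxn))
    · rintro ⟨x, hxn, hm⟩
      rw [Finset.mem_erase, Finset.mem_erase, mem_pencil] at hm
      rw [mem_pts] at hxn
      obtain ⟨hmlin, hmn, hxm⟩ := hm
      have hxP : x ∉ S.P' := S.ext_pt_not_P' hn hxn
      have hmext : S.Ext m := by
        rcases S.dichotomy m with h | h
        · exact absurd (S.lin_eq hxP h hxm) hmlin
        · exact h
      exact ⟨Finset.mem_univ m, hmext, hmn.symm, x, hxn, hxm⟩
  rw [key, Finset.card_biUnion]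
  · have hinner : ∀ x ∈ pts S.I n, (((pencil S.I x).erase n).erase (S.lin x)).card
        = S.q - 1 := by
      intro x hx
      rw [mem_pts] at hx
      have hxP : x ∉ S.P' := S.ext_pt_not_P' hn hx
      rw [Finset.card_erase_of_mem, Finset.card_erase_of_mem (mem_pencil.2 hx),
        S.hGQ.card_pencil x]
      · omega
      · rw [Finset.mem_erase, mem_pencil]
        exact ⟨fun e => S.L'_not_ext (e ▸ S.lin_mem hxP) hn, S.lin_inc hxP⟩
    rw [Finset.sum_congr rfl hinner, Finset.sum_const, S.hGQ.card_pts n, smul_eq_mul]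
    ring
  · intro x hx y hy hxy
    rw [Finset.mem_coe, mem_pts] at hx hy
    rw [Function.onFun, Finset.disjoint_left]
    intro m hm hm'
    rw [Finset.mem_erase, Finset.mem_erase, mem_pencil] at hm hm'
    exact hm.2.1 (S.hGQ.unique_line hxy hm.2.2 hm'.2.2 hx hy)

/-- unique transversal from a point off a line -/
lemma transversal_unique {k : L} {x : P} (hxk : ¬ S.I x k) :
    ∃! m : L, S.I x m ∧ ∃ z : P, S.I z k ∧ S.I z m :=
  S.hGQ.dual.gq k x hxk

/-- number of transversals of two non-concurrent lines -/
lemma card_trans {k n : L} (hkn : k ≠ n) (hnc : ¬ Concurrent S.I k n) :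
    (Finset.univ.filter (fun m => Concurrent S.I k m ∧ Concurrent S.I n m)).card
      = S.q ^ 2 + 1 := by
  classical
  have key : Finset.univ.filter (fun m => Concurrent S.I k m ∧ Concurrent S.I n m)
      = (pts S.I k).biUnion (fun x => Finset.univ.filter
          (fun m => S.I x m ∧ Concurrent S.I n m)) := by
    apply Finset.ext
    intro m
    rw [Finset.mem_filter, Finset.mem_biUnion]
    constructor
    · rintro ⟨-, ⟨-, x, hxk, hxm⟩, hcn⟩
      exact ⟨x, mem_pts.2 hxk, Finset.mem_filter.2 ⟨Finset.mem_univ m, hxm, hcn⟩⟩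
    · rintro ⟨x, hxk, hm⟩
      rw [mem_pts] at hxk
      rw [Finset.mem_filter] at hm
      obtain ⟨-, hxm, hcn⟩ := hm
      have hmk : k ≠ m := by
        rintro rfl
        exact hnc (conc_symm hcn)
      exact ⟨Finset.mem_univ m, ⟨hmk, x, hxk, hxm⟩, hcn⟩
  rw [key, Finset.card_biUnion]
  · have hinner : ∀ x ∈ pts S.I k, (Finset.univ.filter
        (fun m => S.I x m ∧ Concurrent S.I n m)).card = 1 := by
      intro x hx
      rw [mem_pts] at hx
      have hxn : ¬ S.I x n := fun hc => hnc ⟨hkn, x, hx, hc⟩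
      obtain ⟨r, ⟨hxr, z, hzn, hzr⟩, hu⟩ := S.transversal_unique hxn
      rw [Finset.card_eq_one]
      refine ⟨r, ?_⟩
      apply Finset.eq_singleton_iff_unique_mem.2
      constructor
      · rw [Finset.mem_filter]
        refine ⟨Finset.mem_univ r, hxr, ?_, z, hzn, hzr⟩
        rintro rfl
        exact hxn hxr
      · intro m hm
        rw [Finset.mem_filter] at hm
        obtain ⟨-, hxm, -, z', hz'n, hz'm⟩ := hm
        exact hu m ⟨hxm, z', hz'n, hz'm⟩
    rw [Finset.sum_congr rfl hinner, Finset.sum_const, S.hGQ.card_pts k, smul_eq_mul]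
    ring
  · intro x hx y hy hxy
    rw [Finset.mem_coe, mem_pts] at hx hy
    rw [Function.onFun, Finset.disjoint_left]
    intro m hm hm'
    rw [Finset.mem_filter] at hm hm'
    have : k = m := S.hGQ.unique_line hxy hx hy hm.2.1 hm'.2.1
    exact hnc (conc_symm (this ▸ hm.2.2))

/-- two transversals of a non-concurrent pair are non-concurrent -/
lemma trans_nonconc {k n : L} (hkn : k ≠ n) (hnc : ¬ Concurrent S.I k n)
    {c c' : L} (hc : Concurrent S.I k c ∧ Concurrent S.I n c)
    (hc' : Concurrent S.I k c' ∧ Concurrent S.I n c') (hcc' : c ≠ c') :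
    ¬ Concurrent S.I c c' := by
  intro h
  obtain ⟨z, hzc, hzc', hzk⟩ := S.tri_common h (conc_symm hc.1) (conc_symm hc'.1)
  obtain ⟨w, hwc, hwc', hwn⟩ := S.tri_common h (conc_symm hc.2) (conc_symm hc'.2)
  have hzw : z ≠ w := by
    rintro rfl
    exact hnc ⟨hkn, z, hzk, hwn⟩
  exact hcc' (S.hGQ.unique_line hzw hzc hwc hzc' hwc')

/-- number of lines concurrent with a given line -/
lemma card_conc (m : L) :
    (Finset.univ.filter (fun m' => Concurrent S.I m m')).card = S.q * (S.q ^ 2 + 1) := by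
  classical
  have key : Finset.univ.filter (fun m' => Concurrent S.I m m')
      = (pts S.I m).biUnion (fun x => (pencil S.I x).erase m) := by
    apply Finset.ext
    intro m'
    rw [Finset.mem_filter, Finset.mem_biUnion]
    constructor
    · rintro ⟨-, hne, x, hxm, hxm'⟩
      exact ⟨x, mem_pts.2 hxm, Finset.mem_erase.2 ⟨fun e => hne (e ▸ rfl), mem_pencil.2 hxm'⟩⟩
    · rintro ⟨x, hxm, hm'⟩
      rw [mem_pts] at hxm
      rw [Finset.mem_erase, mem_pencil] at hm'
      exact ⟨Finset.mem_univ m', fun e => hm'.1 e.symm, x, hxm, hm'.2⟩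
  rw [key, Finset.card_biUnion]
  · have hinner : ∀ x ∈ pts S.I m, ((pencil S.I x).erase m).card = S.q := by
      intro x hx
      rw [mem_pts] at hx
      rw [Finset.card_erase_of_mem (mem_pencil.2 hx), S.hGQ.card_pencil x]
      omega
    rw [Finset.sum_congr rfl hinner, Finset.sum_const, S.hGQ.card_pts m, smul_eq_mul]
    ring
  · intro x hx y hy hxy
    rw [Finset.mem_coe, mem_pts] at hx hy
    rw [Function.onFun, Finset.disjoint_left]
    intro m' hm' hm''
    rw [Finset.mem_erase, mem_pencil] at hm' hm''
    exact hm'.1 (S.hGQ.unique_line hxy hm'.2 hm''.2 hx hy)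

/-- a common transversal of two concurrent lines passes through their meet -/
lemma thru_meet {k c m : L} {p : P} (hpk : S.I p k) (hpc : S.I p c)
    (h1 : Concurrent S.I c m) (h2 : Concurrent S.I k m) (hkc : k ≠ c) : S.I p m := by
  obtain ⟨z, hzc, hzm, hzk⟩ := S.tri_common h1 ⟨hkc.symm, p, hpc, hpk⟩ (conc_symm h2)
  have : z = p := S.hGQ.pt_unique hkc hzk hzc hpk hpc
  exact this ▸ hzm

/-- The triad theorem: if k1, k2 are distinct non-concurrent lines and n is a line
non-concurrent with (and different from) both, then exactly `q+1` of the `q^2+1`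
common transversals of k1,k2 are concurrent with n. -/
lemma triad {k1 k2 : L} (hne : k1 ≠ k2) (hnc : ¬ Concurrent S.I k1 k2)
    {n0 : L} (h10 : ¬ Concurrent S.I k1 n0) (h20 : ¬ Concurrent S.I k2 n0)
    (hn10 : n0 ≠ k1) (hn20 : n0 ≠ k2) :
    ((Finset.univ.filter (fun m => Concurrent S.I k1 m ∧ Concurrent S.I k2 m)).filter
      (fun c => Concurrent S.I c n0)).card = S.q + 1 := by
  classical
  have hq := S.hq
  set Q := S.q with hQ
  set C : Finset L := Finset.univ.filter
    (fun m => Concurrent S.I k1 m ∧ Concurrent S.I k2 m) with hC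
  set G : Finset L := Finset.univ.filter
    (fun n => ¬ (Concurrent S.I k1 n ∨ n = k1 ∨ Concurrent S.I k2 n ∨ n = k2)) with hG
  have hn0G : n0 ∈ G := by
    rw [hG, Finset.mem_filter]
    refine ⟨Finset.mem_univ _, ?_⟩
    push_neg
    exact ⟨h10, hn10, h20, hn20⟩
  set f : L → ℕ := fun n => (C.filter (fun c => Concurrent S.I c n)).card with hf
  have hcardC : C.card = Q ^ 2 + 1 := S.card_trans hne hnc
  -- cardinality of G
  have hGcard : G.card = Q * (Q - 1) * (Q ^ 2 + 1) := by
    have hsplit : G.card + (Finset.univ.filter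
        (fun n => Concurrent S.I k1 n ∨ n = k1 ∨ Concurrent S.I k2 n ∨ n = k2)).card
        = Fintype.card L := by
      rw [hG, ← Finset.card_univ, ← Finset.card_filter_add_card_filter_not
        (p := fun n => Concurrent S.I k1 n ∨ n = k1 ∨ Concurrent S.I k2 n ∨ n = k2)
        (s := Finset.univ), add_comm]
    have hBad : Finset.univ.filter
        (fun n => Concurrent S.I k1 n ∨ n = k1 ∨ Concurrent S.I k2 n ∨ n = k2)
        = (Finset.univ.filter (fun n => Concurrent S.I k1 n ∨ n = k1)) ∪
          (Finset.univ.filter (fun n => Concurrent S.I k2 n ∨ n = k2)) := by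
      apply Finset.ext
      intro m
      simp only [Finset.mem_filter, Finset.mem_union, Finset.mem_univ, true_and]
      tauto
    have hInter : (Finset.univ.filter (fun n => Concurrent S.I k1 n ∨ n = k1)) ∩
          (Finset.univ.filter (fun n => Concurrent S.I k2 n ∨ n = k2)) = C := by
      apply Finset.ext
      intro m
      simp only [Finset.mem_inter, Finset.mem_filter, Finset.mem_univ, true_and, hC]
      constructor
      · rintro ⟨h1 | rfl, h2 | rfl⟩
        · exact ⟨h1, h2⟩
        · exact absurd h1 hnc
        · exact absurd (conc_symm h2) hnc
        · exact absurd rfl hne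
      · rintro ⟨h1, h2⟩
        exact ⟨Or.inl h1, Or.inl h2⟩
    have hB1 : (Finset.univ.filter (fun n => Concurrent S.I k1 n ∨ n = k1)).card
        = Q * (Q ^ 2 + 1) + 1 := by
      have hsingle : Finset.univ.filter (fun n : L => n = k1) = {k1} := by
        apply Finset.ext; intro m; simp
      rw [Finset.filter_or, hsingle,
        Finset.card_union_of_disjoint, S.card_conc k1, Finset.card_singleton]
      rw [Finset.disjoint_right]
      intro a ha
      rw [Finset.mem_singleton] at ha
      subst ha
      rw [Finset.mem_filter]
      rintro ⟨-, hcc⟩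
      exact hcc.1 rfl
    have hB2 : (Finset.univ.filter (fun n => Concurrent S.I k2 n ∨ n = k2)).card
        = Q * (Q ^ 2 + 1) + 1 := by
      have hsingle : Finset.univ.filter (fun n : L => n = k2) = {k2} := by
        apply Finset.ext; intro m; simp
      rw [Finset.filter_or, hsingle,
        Finset.card_union_of_disjoint, S.card_conc k2, Finset.card_singleton]
      rw [Finset.disjoint_right]
      intro a ha
      rw [Finset.mem_singleton] at ha
      subst ha
      rw [Finset.mem_filter]
      rintro ⟨-, hcc⟩
      exact hcc.1 rfl
    have hUnionCard := Finset.card_union_add_card_inter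
      (Finset.univ.filter (fun n => Concurrent S.I k1 n ∨ n = k1))
      (Finset.univ.filter (fun n => Concurrent S.I k2 n ∨ n = k2))
    rw [hInter, hB1, hB2, hcardC] at hUnionCard
    rw [hBad] at hsplit
    rw [S.card_L] at hsplit
    have h1q : 1 ≤ Q := by omega
    zify [h1q] at hsplit hUnionCard ⊢
    linarith [hsplit, hUnionCard]
  -- per-transversal count
  have hg : ∀ c ∈ C, (G.filter (fun n => Concurrent S.I c n)).card + 2 * Q
      = Q * (Q ^ 2 + 1) := by
    intro c hc
    rw [hC, Finset.mem_filter] at hc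
    obtain ⟨-, hc1, hc2⟩ := hc
    obtain ⟨hk1c, p1, hp1k, hp1c⟩ := hc1
    obtain ⟨hk2c, p2, hp2k, hp2c⟩ := hc2
    have hp12 : p1 ≠ p2 := by
      rintro rfl
      exact hnc ⟨hne, p1, hp1k, hp2k⟩
    set badc : Finset L := ({k1, k2} : Finset L) ∪ ((pencil S.I p1).erase c).erase k1
        ∪ ((pencil S.I p2).erase c).erase k2 with hbadc
    have hsplit2 : Finset.univ.filter (fun m => Concurrent S.I c m)
        = G.filter (fun n => Concurrent S.I c n) ∪ badc := by
      apply Finset.ext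
      intro m
      simp only [Finset.mem_filter, Finset.mem_univ, true_and, Finset.mem_union, hbadc,
        Finset.mem_insert, Finset.mem_singleton, Finset.mem_erase, mem_pencil, hG]
      constructor
      · intro hcm
        by_cases hmG : (Concurrent S.I k1 m ∨ m = k1 ∨ Concurrent S.I k2 m ∨ m = k2)
        · right
          rcases hmG with h | h | h | h
          · left; right
            exact ⟨h.1.symm, hcm.1.symm, S.thru_meet hp1k hp1c hcm h hk1c⟩
          · left; left; left; exact h
          · right
            exact ⟨h.1.symm, hcm.1.symm, S.thru_meet hp2k hp2c hcm h hk2c⟩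
          · left; left; right; exact h
        · left; exact ⟨hmG, hcm⟩
      · intro hm
        rcases hm with ⟨-, hcm⟩ | ((h | h) | h)
        · exact hcm
        · rcases h with rfl | rfl
          · exact conc_symm ⟨hk1c, p1, hp1k, hp1c⟩
          · exact conc_symm ⟨hk2c, p2, hp2k, hp2c⟩
        · exact ⟨fun e => h.2.1 e.symm, p1, hp1c, h.2.2⟩
        · exact ⟨fun e => h.2.1 e.symm, p2, hp2c, h.2.2⟩
    have hdisj : Disjoint (G.filter (fun n => Concurrent S.I c n)) badc := by
      rw [Finset.disjoint_left]
      intro m hm hmb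
      rw [Finset.mem_filter, hG, Finset.mem_filter] at hm
      apply hm.1.2
      rw [hbadc] at hmb
      simp only [Finset.mem_union, Finset.mem_insert, Finset.mem_singleton,
        Finset.mem_erase, mem_pencil] at hmb
      rcases hmb with (h | h) | h
      · rcases h with rfl | rfl
        · right; left; rfl
        · right; right; right; rfl
      · left; exact ⟨fun e => h.1 e.symm, p1, hp1k, h.2.2⟩
      · right; right; left; exact ⟨fun e => h.1 e.symm, p2, hp2k, h.2.2⟩
    have hbadcard : badc.card = 2 * Q := by
      have hA1 : (((pencil S.I p1).erase c).erase k1).card = Q - 1 := by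
        rw [Finset.card_erase_of_mem, Finset.card_erase_of_mem (mem_pencil.2 hp1c),
          S.hGQ.card_pencil p1]
        · omega
        · rw [Finset.mem_erase, mem_pencil]
          exact ⟨hk1c, hp1k⟩
      have hA2 : (((pencil S.I p2).erase c).erase k2).card = Q - 1 := by
        rw [Finset.card_erase_of_mem, Finset.card_erase_of_mem (mem_pencil.2 hp2c),
          S.hGQ.card_pencil p2]
        · omega
        · rw [Finset.mem_erase, mem_pencil]
          exact ⟨hk2c, hp2k⟩
      rw [hbadc, Finset.card_union_of_disjoint, Finset.card_union_of_disjoint, hA1, hA2]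
      · rw [Finset.card_insert_of_notMem, Finset.card_singleton]
        · omega
        · rw [Finset.mem_singleton]; exact hne
      · rw [Finset.disjoint_right]
        intro m hm
        rw [Finset.mem_erase, Finset.mem_erase, mem_pencil] at hm
        simp only [Finset.mem_insert, Finset.mem_singleton]
        push_neg
        refine ⟨fun e => hm.1 e, ?_⟩
        rintro rfl
        exact hnc ⟨hne, p1, hp1k, hm.2.2⟩
      · rw [Finset.disjoint_right]
        intro m hm
        rw [Finset.mem_erase, Finset.mem_erase, mem_pencil] at hm
        simp only [Finset.mem_union, Finset.mem_insert, Finset.mem_singleton,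
          Finset.mem_erase, mem_pencil]
        push_neg
        refine ⟨⟨?_, fun e => hm.1 e⟩, ?_⟩
        · rintro rfl
          exact hnc ⟨hne, p2, hm.2.2, hp2k⟩
        · intro hmk1 hmc hIp1m
          exact hmc (S.hGQ.unique_line hp12 hIp1m hm.2.2 hp1c hp2c)
    have hcc := S.card_conc c
    rw [hsplit2, Finset.card_union_of_disjoint hdisj, hbadcard, ← hQ] at hcc
    exact hcc
  -- pair counts
  have hpair : ∀ c ∈ C, ∀ c' ∈ C, c ≠ c' →
      (G.filter (fun n => Concurrent S.I c n ∧ Concurrent S.I c' n)).card + 2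
        = Q ^ 2 + 1 := by
    intro c hcC c' hc'C hcc'
    rw [hC, Finset.mem_filter] at hcC hc'C
    obtain ⟨-, hc1, hc2⟩ := hcC
    obtain ⟨-, hc'1, hc'2⟩ := hc'C
    have hccnc : ¬ Concurrent S.I c c' :=
      S.trans_nonconc hne hnc ⟨hc1, hc2⟩ ⟨hc'1, hc'2⟩ hcc'
    have hD : (Finset.univ.filter
        (fun m => Concurrent S.I c m ∧ Concurrent S.I c' m)).card
        = Q ^ 2 + 1 := S.card_trans hcc' hccnc
    obtain ⟨hk1c, p1, hp1k, hp1c⟩ := hc1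
    obtain ⟨hk2c, p2, hp2k, hp2c⟩ := hc2
    obtain ⟨hk1c', p1', hp1'k, hp1'c⟩ := hc'1
    obtain ⟨hk2c', p2', hp2'k, hp2'c⟩ := hc'2
    have hp11' : p1 ≠ p1' := by
      rintro rfl
      exact hccnc ⟨hcc', p1, hp1c, hp1'c⟩
    have hp22' : p2 ≠ p2' := by
      rintro rfl
      exact hccnc ⟨hcc', p2, hp2c, hp2'c⟩
    have hDsplit : Finset.univ.filter
        (fun m => Concurrent S.I c m ∧ Concurrent S.I c' m)
        = G.filter (fun n => Concurrent S.I c n ∧ Concurrent S.I c' n) ∪ {k1, k2} := by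
      apply Finset.ext
      intro m
      simp only [Finset.mem_filter, Finset.mem_univ, true_and, Finset.mem_union,
        Finset.mem_insert, Finset.mem_singleton, hG]
      constructor
      · rintro ⟨hcm, hc'm⟩
        by_cases hm1 : m = k1
        · right; left; exact hm1
        by_cases hm2 : m = k2
        · right; right; exact hm2
        left
        refine ⟨?_, hcm, hc'm⟩
        rintro (h | h | h | h)
        · exact hm1 (S.hGQ.unique_line hp11'
            (S.thru_meet hp1k hp1c hcm h hk1c)
            (S.thru_meet hp1'k hp1'c hc'm h hk1c') hp1k hp1'k)
        · exact hm1 h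
        · exact hm2 (S.hGQ.unique_line hp22'
            (S.thru_meet hp2k hp2c hcm h hk2c)
            (S.thru_meet hp2'k hp2'c hc'm h hk2c') hp2k hp2'k)
        · exact hm2 h
      · rintro (⟨-, hcm, hc'm⟩ | (rfl | rfl))
        · exact ⟨hcm, hc'm⟩
        · exact ⟨conc_symm ⟨hk1c, p1, hp1k, hp1c⟩, conc_symm ⟨hk1c', p1', hp1'k, hp1'c⟩⟩
        · exact ⟨conc_symm ⟨hk2c, p2, hp2k, hp2c⟩, conc_symm ⟨hk2c', p2', hp2'k, hp2'c⟩⟩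
    have hdisjD : Disjoint
        (G.filter (fun n => Concurrent S.I c n ∧ Concurrent S.I c' n)) ({k1, k2} : Finset L) := by
      rw [Finset.disjoint_right]
      intro m hm hm'
      rw [Finset.mem_insert, Finset.mem_singleton] at hm
      rw [Finset.mem_filter, hG, Finset.mem_filter] at hm'
      apply hm'.1.2
      rcases hm with rfl | rfl
      · right; left; rfl
      · right; right; right; rfl
    rw [hDsplit, Finset.card_union_of_disjoint hdisjD, Finset.card_pair hne] at hD
    exact hD
  -- rationalized counts
  have hgQ : ∀ c ∈ C, ((G.filter (fun n => Concurrent S.I c n)).card : ℚ)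
      = (Q:ℚ)^3 - Q := by
    intro c hc
    have h := hg c hc
    have h' : ((G.filter (fun n => Concurrent S.I c n)).card : ℚ) + 2*Q
        = Q*((Q:ℚ)^2+1) := by exact_mod_cast h
    linear_combination h'
  have hpairQ : ∀ c ∈ C, ∀ c' ∈ C, c ≠ c' →
      ((G.filter (fun n => Concurrent S.I c n ∧ Concurrent S.I c' n)).card : ℚ)
        = (Q:ℚ)^2 - 1 := by
    intro c hc c' hc' hcc'
    have h := hpair c hc c' hc' hcc'
    have h' : ((G.filter (fun n => Concurrent S.I c n ∧ Concurrent S.I c' n)).card : ℚ) + 2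
        = (Q:ℚ)^2 + 1 := by exact_mod_cast h
    linear_combination h'
  have hfQ : ∀ n, (f n : ℚ) = ∑ c ∈ C, (if Concurrent S.I c n then (1:ℚ) else 0) := by
    intro n
    rw [Finset.sum_boole]
  have hsum1 : ∑ n ∈ G, (f n : ℚ) = ((Q:ℚ)^2+1) * ((Q:ℚ)^3 - Q) := by
    have e1 : ∀ n ∈ G, (f n:ℚ) = ∑ c ∈ C, (if Concurrent S.I c n then (1:ℚ) else 0) :=
      fun n _ => hfQ n
    rw [Finset.sum_congr rfl e1, Finset.sum_comm]
    have e2 : ∀ c ∈ C, (∑ n ∈ G, if Concurrent S.I c n then (1:ℚ) else 0)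
        = (Q:ℚ)^3 - (Q:ℚ) := by
      intro c hc
      rw [Finset.sum_boole, hgQ c hc]
    rw [Finset.sum_congr rfl e2, Finset.sum_const, hcardC, nsmul_eq_mul]
    push_cast
    ring
  have hsum2 : ∑ n ∈ G, (f n : ℚ)^2
      = ((Q:ℚ)^2+1) * (((Q:ℚ)^3 - Q) + (Q:ℚ)^2 * ((Q:ℚ)^2-1)) := by
    have expand : ∀ n ∈ G, (f n:ℚ)^2 = ∑ c ∈ C, ∑ c' ∈ C,
        (if Concurrent S.I c n ∧ Concurrent S.I c' n then (1:ℚ) else 0) := by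
      intro n _
      rw [sq, hfQ n, Finset.sum_mul_sum]
      refine Finset.sum_congr rfl fun c _ => Finset.sum_congr rfl fun c' _ => ?_
      by_cases h1 : Concurrent S.I c n <;> by_cases h2 : Concurrent S.I c' n <;>
        simp [h1, h2]
    rw [Finset.sum_congr rfl expand, Finset.sum_comm]
    have hinner : ∀ c ∈ C, (∑ n ∈ G, ∑ c' ∈ C,
        (if Concurrent S.I c n ∧ Concurrent S.I c' n then (1:ℚ) else 0))
        = ((Q:ℚ)^3 - Q) + (Q:ℚ)^2 * ((Q:ℚ)^2-1) := by
      intro c hc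
      rw [Finset.sum_comm, ← Finset.add_sum_erase _ _ hc]
      have ediag : (∑ n ∈ G, if Concurrent S.I c n ∧ Concurrent S.I c n then (1:ℚ) else 0)
          = (Q:ℚ)^3 - Q := by
        have : ∀ n ∈ G, (if Concurrent S.I c n ∧ Concurrent S.I c n then (1:ℚ) else 0)
            = (if Concurrent S.I c n then (1:ℚ) else 0) := by
          intro n _; simp only [and_self]
        rw [Finset.sum_congr rfl this, Finset.sum_boole, hgQ c hc]
      have eoff : ∀ c' ∈ C.erase c, (∑ n ∈ G,
          if Concurrent S.I c n ∧ Concurrent S.I c' n then (1:ℚ) else 0)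
          = (Q:ℚ)^2 - 1 := by
        intro c' hc'
        rw [Finset.mem_erase] at hc'
        rw [Finset.sum_boole, hpairQ c hc c' hc'.2 (fun e => hc'.1 e.symm)]
      rw [ediag, Finset.sum_congr rfl eoff, Finset.sum_const,
        Finset.card_erase_of_mem hc, hcardC, nsmul_eq_mul]
      push_cast
      ring
    rw [Finset.sum_congr rfl hinner, Finset.sum_const, hcardC, nsmul_eq_mul]
    push_cast
    ring
  have hGcardQ : ((G.card : ℚ)) = ((Q:ℚ)^2 - Q) * ((Q:ℚ)^2+1) := by
    rw [hGcard]
    have h1q : 1 ≤ Q := by omega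
    push_cast [Nat.cast_sub h1q]
    ring
  have hvar : ∑ n ∈ G, ((f n:ℚ) - ((Q:ℚ)+1))^2 = 0 := by
    have e : ∀ n ∈ G, ((f n:ℚ) - ((Q:ℚ)+1))^2
        = (f n:ℚ)^2 - 2*((Q:ℚ)+1)*(f n:ℚ) + ((Q:ℚ)+1)^2 := fun n _ => by ring
    rw [Finset.sum_congr rfl e, Finset.sum_add_distrib, Finset.sum_sub_distrib,
      ← Finset.mul_sum, Finset.sum_const, hsum1, hsum2, nsmul_eq_mul, hGcardQ]
    ring
  have hzero := (Finset.sum_eq_zero_iff_of_nonneg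
    (fun n _ => sq_nonneg ((f n:ℚ) - ((Q:ℚ)+1)))).1 hvar n0 hn0G
  have hfn0 : (f n0 : ℚ) = (Q:ℚ) + 1 := by
    have := pow_eq_zero_iff (n := 2) (by norm_num) |>.1 hzero
    linarith [sub_eq_zero.1 this]
  exact_mod_cast hfn0

/-- an L'-transversal of an external line also meets its antipode -/
lemma transL'_antipode {k m : L} (hk : S.Ext k) (hm : m ∈ S.L')
    (hc : Concurrent S.I k m) : Concurrent S.I (S.σL k) m := by
  obtain ⟨hkm, x, hxk, hxm⟩ := hc
  have hxP : x ∉ S.P' := S.ext_pt_not_P' hk hxk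
  have hml : m = S.lin x := S.lin_eq hxP hm hxm
  refine ⟨fun e => S.L'_not_ext hm (e ▸ S.ext_sigma hk), S.σP x, S.sigma_pt hxk, ?_⟩
  rw [hml]
  exact S.lin_sigma hxP

/-- generic case: q+1 transversals of two "generic" external lines lie in L' -/
lemma card_transL'_generic {k n : L} (hk : S.Ext k) (hnc : ¬ Concurrent S.I k n)
    (hnk : n ≠ k) (hnσ : n ≠ S.σL k) (hncσ : ¬ Concurrent S.I (S.σL k) n) :
    (Finset.univ.filter
      (fun m => m ∈ S.L' ∧ Concurrent S.I k m ∧ Concurrent S.I n m)).card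
      = S.q + 1 := by
  have hne : k ≠ S.σL k := (S.hσmove k hk).symm
  have hnc2 : ¬ Concurrent S.I k (S.σL k) := S.antipode_not_conc hk
  have key : Finset.univ.filter
      (fun m => m ∈ S.L' ∧ Concurrent S.I k m ∧ Concurrent S.I n m)
      = (Finset.univ.filter
          (fun m => Concurrent S.I k m ∧ Concurrent S.I (S.σL k) m)).filter
        (fun c => Concurrent S.I c n) := by
    apply Finset.ext
    intro m
    simp only [Finset.mem_filter, Finset.mem_univ, true_and]
    constructor
    · rintro ⟨hmL, hkm, hnm⟩
      exact ⟨⟨hkm, S.transL'_antipode hk hmL hkm⟩, conc_symm hnm⟩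
    · rintro ⟨⟨hkm, hσm⟩, hmn⟩
      refine ⟨?_, hkm, conc_symm hmn⟩
      rcases S.dichotomy m with h | h
      · exact h
      · exact absurd (S.no_common_perp hk h hkm hσm) not_false
  rw [key]
  exact S.triad hne hnc2 hnc hncσ hnk hnσ

/-- special case: if n is concurrent with the antipode of k, exactly one
transversal of k and n lies in L' -/
lemma card_transL'_special {k n : L} (hk : S.Ext k) (hn : S.Ext n)
    (hnc : ¬ Concurrent S.I k n) (hσn : Concurrent S.I (S.σL k) n) :
    (Finset.univ.filter
      (fun m => m ∈ S.L' ∧ Concurrent S.I k m ∧ Concurrent S.I n m)).card = 1 := by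
  obtain ⟨hσkn, v, hvσ, hvn⟩ := hσn
  have hvP : v ∉ S.P' := S.ext_pt_not_P' hn hvn
  have hσvk : S.I (S.σP v) k := by
    have := S.sigma_pt hvσ
    rwa [S.hσL2 k] at this
  rw [Finset.card_eq_one]
  refine ⟨S.lin v, ?_⟩
  apply Finset.eq_singleton_iff_unique_mem.2
  constructor
  · rw [Finset.mem_filter]
    refine ⟨Finset.mem_univ _, S.lin_mem hvP, ?_, ?_⟩
    · exact ⟨fun e => S.L'_not_ext (e ▸ S.lin_mem hvP) hk, S.σP v, hσvk, S.lin_sigma hvP⟩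
    · exact ⟨fun e => S.L'_not_ext (e ▸ S.lin_mem hvP) hn, v, hvn, S.lin_inc hvP⟩
  · intro m hm
    rw [Finset.mem_filter] at hm
    obtain ⟨-, hmL, hkm, hnm⟩ := hm
    by_contra hmv
    have hvm : ¬ S.I v m := by
      intro hc
      exact hmv (S.lin_eq hvP hmL hc)
    obtain ⟨hkm', x, hxk, hxm⟩ := hkm
    obtain ⟨hnm', y, hyn, hym⟩ := hnm
    have hxP : x ∉ S.P' := S.ext_pt_not_P' hk hxk
    have hσxm : S.I (S.σP x) m := by
      have := S.lin_sigma hxP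
      rwa [← S.lin_eq hxP hmL hxm] at this
    have hσxσk : S.I (S.σP x) (S.σL k) := S.sigma_pt hxk
    have hyσx : y = S.σP x :=
      S.hGQ.center_unique hvm hym hσxm hyn hvn hσxσk hvσ
    have hyv : y = v := S.hGQ.pt_unique hσkn (hyσx ▸ hσxσk) hyn hvσ hvn
    exact hvm (hyv ▸ hym)

/-- splitting all transversals into external and L' ones -/
lemma perp2_split {k n : L} (hkn : k ≠ n) (hnc : ¬ Concurrent S.I k n) :
    (Finset.univ.filter
      (fun m => S.Ext m ∧ Concurrent S.I k m ∧ Concurrent S.I n m)).card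
    + (Finset.univ.filter
      (fun m => m ∈ S.L' ∧ Concurrent S.I k m ∧ Concurrent S.I n m)).card
    = S.q ^ 2 + 1 := by
  rw [← S.card_trans hkn hnc, ← Finset.card_union_of_disjoint]
  · congr 1
    apply Finset.ext
    intro m
    simp only [Finset.mem_union, Finset.mem_filter, Finset.mem_univ, true_and]
    constructor
    · rintro (⟨-, h⟩ | ⟨-, h⟩) <;> exact h
    · intro h
      rcases S.dichotomy m with hL | hE
      · right; exact ⟨hL, h⟩
      · left; exact ⟨hE, h⟩
  · rw [Finset.disjoint_left]
    intro m hm hm'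
    rw [Finset.mem_filter] at hm hm'
    exact S.L'_not_ext hm'.2.1 hm.2.1

/-- external common perps, generic case: q^2 - q -/
lemma ext_perp2_generic {k n : L} (hk : S.Ext k) (hnc : ¬ Concurrent S.I k n)
    (hnk : n ≠ k) (hnσ : n ≠ S.σL k) (hncσ : ¬ Concurrent S.I (S.σL k) n) :
    (Finset.univ.filter
      (fun m => S.Ext m ∧ Concurrent S.I k m ∧ Concurrent S.I n m)).card
      = S.q ^ 2 - S.q := by
  have h1 := S.perp2_split hnk.symm hnc
  rw [S.card_transL'_generic hk hnc hnk hnσ hncσ] at h1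
  omega

/-- external common perps, antipode-concurrent case: q^2 -/
lemma ext_perp2_special {k n : L} (hk : S.Ext k) (hn : S.Ext n)
    (hnc : ¬ Concurrent S.I k n) (hnk : n ≠ k) (hσn : Concurrent S.I (S.σL k) n) :
    (Finset.univ.filter
      (fun m => S.Ext m ∧ Concurrent S.I k m ∧ Concurrent S.I n m)).card
      = S.q ^ 2 := by
  have h1 := S.perp2_split hnk.symm hnc
  rw [S.card_transL'_special hk hn hnc hσn] at h1
  omega

/-- external common perps of two concurrent external lines: q - 2 -/
lemma ext_perp2_conc {k n : L} (hk : S.Ext k) (hn : S.Ext n)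
    (hc : Concurrent S.I k n) :
    (Finset.univ.filter
      (fun m => S.Ext m ∧ Concurrent S.I k m ∧ Concurrent S.I n m)).card
      = S.q - 2 := by
  obtain ⟨hkn, x, hxk, hxn⟩ := hc
  have hxP : x ∉ S.P' := S.ext_pt_not_P' hk hxk
  have hklin : k ≠ S.lin x := fun e => S.L'_not_ext (e ▸ S.lin_mem hxP) hk
  have hnlin : n ≠ S.lin x := fun e => S.L'_not_ext (e ▸ S.lin_mem hxP) hn
  have key : Finset.univ.filter
      (fun m => S.Ext m ∧ Concurrent S.I k m ∧ Concurrent S.I n m)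
      = (((pencil S.I x).erase (S.lin x)).erase k).erase n := by
    apply Finset.ext
    intro m
    simp only [Finset.mem_filter, Finset.mem_univ, true_and, Finset.mem_erase, mem_pencil]
    constructor
    · rintro ⟨hmE, hkm, hnm⟩
      obtain ⟨z, hzk, hzn, hzm⟩ := S.tri_common ⟨hkn, x, hxk, hxn⟩ hkm hnm
      have hzx : z = x := S.hGQ.pt_unique hkn hzk hzn hxk hxn
      subst hzx
      exact ⟨fun e => hnm.1 e.symm, fun e => hkm.1 e.symm,
        fun e => S.L'_not_ext (e ▸ S.lin_mem hxP) hmE, hzm⟩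
    · rintro ⟨hmn, hmk, hmlin, hxm⟩
      have hmE : S.Ext m := by
        rcases S.dichotomy m with h | h
        · exact absurd (S.lin_eq hxP h hxm) hmlin
        · exact h
      exact ⟨hmE, ⟨fun e => hmk e.symm, x, hxk, hxm⟩, ⟨fun e => hmn e.symm, x, hxn, hxm⟩⟩
  have hmem_lin : S.lin x ∈ pencil S.I x := mem_pencil.2 (S.lin_inc hxP)
  have hmem_k : k ∈ (pencil S.I x).erase (S.lin x) :=
    Finset.mem_erase.2 ⟨hklin, mem_pencil.2 hxk⟩
  have hmem_n : n ∈ ((pencil S.I x).erase (S.lin x)).erase k :=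
    Finset.mem_erase.2 ⟨hkn.symm, Finset.mem_erase.2 ⟨hnlin, mem_pencil.2 hxn⟩⟩
  rw [key, Finset.card_erase_of_mem hmem_n, Finset.card_erase_of_mem hmem_k,
    Finset.card_erase_of_mem hmem_lin, S.hGQ.card_pencil x]
  omega

/-- the decomposition of the "S-set" within the perp of an external line n -/
lemma cardS_split (ℓ n : L) (hl : S.Ext ℓ) :
    ((Finset.univ.filter (fun k => S.Ext k ∧ Concurrent S.I k n)).filter
      (fun k => k = ℓ ∨ k = S.σL ℓ ∨ (S.Ext k ∧ Concurrent S.I ℓ k)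
        ∨ (S.Ext k ∧ Concurrent S.I (S.σL ℓ) k))).card
    = (if ℓ ∈ Finset.univ.filter (fun k => S.Ext k ∧ Concurrent S.I k n) then 1 else 0)
    + (if S.σL ℓ ∈ Finset.univ.filter (fun k => S.Ext k ∧ Concurrent S.I k n) then 1 else 0)
    + (Finset.univ.filter
        (fun m => S.Ext m ∧ Concurrent S.I ℓ m ∧ Concurrent S.I n m)).card
    + (Finset.univ.filter
        (fun m => S.Ext m ∧ Concurrent S.I (S.σL ℓ) m ∧ Concurrent S.I n m)).card := by
  classical
  set Pn := Finset.univ.filter (fun k => S.Ext k ∧ Concurrent S.I k n) with hPn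
  have hsetsplit : Pn.filter (fun k => k = ℓ ∨ k = S.σL ℓ ∨ (S.Ext k ∧ Concurrent S.I ℓ k)
        ∨ (S.Ext k ∧ Concurrent S.I (S.σL ℓ) k))
      = ((Pn.filter (fun k => k = ℓ) ∪ Pn.filter (fun k => k = S.σL ℓ))
        ∪ Finset.univ.filter
          (fun m => S.Ext m ∧ Concurrent S.I ℓ m ∧ Concurrent S.I n m))
        ∪ Finset.univ.filter
          (fun m => S.Ext m ∧ Concurrent S.I (S.σL ℓ) m ∧ Concurrent S.I n m) := by
    apply Finset.ext
    intro k
    simp only [Finset.mem_filter, Finset.mem_union, Finset.mem_univ, true_and, hPn]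
    constructor
    · rintro ⟨⟨hkE, hkn⟩, (h | h | h | h)⟩
      · exact Or.inl (Or.inl (Or.inl ⟨⟨hkE, hkn⟩, h⟩))
      · exact Or.inl (Or.inl (Or.inr ⟨⟨hkE, hkn⟩, h⟩))
      · exact Or.inl (Or.inr ⟨hkE, h.2, conc_symm hkn⟩)
      · exact Or.inr ⟨hkE, h.2, conc_symm hkn⟩
    · rintro ((( ⟨⟨hkE, hkn⟩, h⟩ | ⟨⟨hkE, hkn⟩, h⟩) | ⟨hkE, h1, h2⟩) | ⟨hkE, h1, h2⟩)
      · exact ⟨⟨hkE, hkn⟩, Or.inl h⟩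
      · exact ⟨⟨hkE, hkn⟩, Or.inr (Or.inl h)⟩
      · exact ⟨⟨hkE, conc_symm h2⟩, Or.inr (Or.inr (Or.inl ⟨hkE, h1⟩))⟩
      · exact ⟨⟨hkE, conc_symm h2⟩, Or.inr (Or.inr (Or.inr ⟨hkE, h1⟩))⟩
  have hσl : S.σL ℓ ≠ ℓ := S.hσmove ℓ hl
  have d12 : Disjoint (Pn.filter (fun k => k = ℓ)) (Pn.filter (fun k => k = S.σL ℓ)) := by
    rw [Finset.disjoint_left]
    rintro k hk hk'
    rw [Finset.mem_filter] at hk hk'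
    exact hσl (hk'.2.symm.trans hk.2)
  have d3 : Disjoint (Pn.filter (fun k => k = ℓ) ∪ Pn.filter (fun k => k = S.σL ℓ))
      (Finset.univ.filter
        (fun m => S.Ext m ∧ Concurrent S.I ℓ m ∧ Concurrent S.I n m)) := by
    rw [Finset.disjoint_left]
    rintro k hk hk'
    simp only [Finset.mem_union, Finset.mem_filter, Finset.mem_univ, true_and] at hk hk'
    rcases hk with ⟨-, heq⟩ | ⟨-, heq⟩
    · exact hk'.2.1.1 heq.symm
    · exact S.antipode_not_conc hl (heq ▸ hk'.2.1)
  have d4 : Disjoint ((Pn.filter (fun k => k = ℓ) ∪ Pn.filter (fun k => k = S.σL ℓ))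
      ∪ Finset.univ.filter
        (fun m => S.Ext m ∧ Concurrent S.I ℓ m ∧ Concurrent S.I n m))
      (Finset.univ.filter
        (fun m => S.Ext m ∧ Concurrent S.I (S.σL ℓ) m ∧ Concurrent S.I n m)) := by
    rw [Finset.disjoint_left]
    rintro k hk hk'
    simp only [Finset.mem_union, Finset.mem_filter, Finset.mem_univ, true_and] at hk hk'
    rcases hk with (⟨-, heq⟩ | ⟨-, heq⟩) | ⟨hkE, hkc, -⟩
    · exact S.antipode_not_conc hl (conc_symm (heq ▸ hk'.2.1))
    · exact hk'.2.1.1 heq.symm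
    · exact S.no_common_perp hl hkE hkc hk'.2.1
  rw [hsetsplit, Finset.card_union_of_disjoint d4, Finset.card_union_of_disjoint d3,
    Finset.card_union_of_disjoint d12, card_filter_eq_ite Pn ℓ,
    card_filter_eq_ite Pn (S.σL ℓ)]


lemma master {ℓ : L} (hl : S.Ext ℓ) :
    (fun n : L => if n = ℓ ∨ n = S.σL ℓ then (1 : ℚ) else 0) ∈
      Submodule.span ℚ (Set.range fun k : L => fun n : L =>
        if S.Ext k ∧ S.Ext n then
          (if k = n then ((S.q : ℚ) ^ 2 + 1)
           else if Concurrent S.I k n then 1 else 0)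
        else 0) := by
  classical
  have hq2 : 2 ≤ S.q := S.hq
  have hQ2 : (2:ℚ) ≤ (S.q:ℚ) := by exact_mod_cast hq2
  set Q : ℚ := (S.q : ℚ) with hQdef
  set D : ℚ := 2*Q^2*(Q+1) with hD
  have hQpos : 0 < Q := by linarith
  have hDne : D ≠ 0 := by rw [hD]; positivity
  have hQ21 : Q^2 + 1 ≠ 0 := by positivity
  have hσl : S.σL ℓ ≠ ℓ := S.hσmove ℓ hl
  have hlσ : S.Ext (S.σL ℓ) := S.ext_sigma hl
  have hnoc : ¬ Concurrent S.I ℓ (S.σL ℓ) := S.antipode_not_conc hl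
  have hnoc' : ¬ Concurrent S.I (S.σL ℓ) ℓ := fun h => hnoc (conc_symm h)
  set Row : L → L → ℚ := fun k n =>
    if S.Ext k ∧ S.Ext n then
      (if k = n then (Q ^ 2 + 1) else if Concurrent S.I k n then 1 else 0)
    else 0 with hRow
  set Spred : L → Prop := fun k => k = ℓ ∨ k = S.σL ℓ ∨ (S.Ext k ∧ Concurrent S.I ℓ k)
      ∨ (S.Ext k ∧ Concurrent S.I (S.σL ℓ) k) with hSpred
  set a : L → ℚ := fun k =>
    (3*Q * (if k = ℓ then 1 else 0) + 3*Q * (if k = S.σL ℓ then 1 else 0)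
     + (2*Q-2)/(Q^2+1) * (if S.Ext k then 1 else 0)
     - (if Spred k then 1 else 0)) / D with ha
  have key : (fun n : L => if n = ℓ ∨ n = S.σL ℓ then (1 : ℚ) else 0)
      = ∑ k : L, a k • Row k := by
    funext n
    rw [Finset.sum_apply]
    simp only [Pi.smul_apply, smul_eq_mul]
    by_cases hnE : S.Ext n
    swap
    · rw [if_neg (by rintro (rfl | rfl); exacts [hnE hl, hnE hlσ])]
      symm
      apply Finset.sum_eq_zero
      intro k _
      have hz : Row k n = 0 := by
        simp only [hRow]
        exact if_neg (fun h => hnE h.2)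
      rw [hz, mul_zero]
    -- main case : n external
    set Pn : Finset L := Finset.univ.filter (fun k => S.Ext k ∧ Concurrent S.I k n)
      with hPn
    have hRowval : ∀ k, Row k n = (Q^2+1) * (if k = n then (1:ℚ) else 0)
        + (if S.Ext k ∧ Concurrent S.I k n then (1:ℚ) else 0) := by
      intro k
      simp only [hRow]
      by_cases hkn : k = n
      · subst hkn
        have hcc : ¬ Concurrent S.I k k := fun h => h.1 rfl
        rw [if_pos (show S.Ext k ∧ S.Ext k from ⟨hnE, hnE⟩), if_pos rfl, if_pos rfl,
          if_neg (fun h : S.Ext k ∧ Concurrent S.I k k => hcc h.2)]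
        ring
      · by_cases hkE : S.Ext k
        · by_cases hc : Concurrent S.I k n
          · rw [if_pos (show S.Ext k ∧ S.Ext n from ⟨hkE, hnE⟩), if_neg hkn, if_pos hc,
              if_neg hkn, if_pos (show S.Ext k ∧ Concurrent S.I k n from ⟨hkE, hc⟩)]
            ring
          · rw [if_pos (show S.Ext k ∧ S.Ext n from ⟨hkE, hnE⟩), if_neg hkn, if_neg hc,
              if_neg hkn, if_neg (fun h : S.Ext k ∧ Concurrent S.I k n => hc h.2)]
            ring
        · rw [if_neg (fun h : S.Ext k ∧ S.Ext n => hkE h.1), if_neg hkn,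
            if_neg (fun h : S.Ext k ∧ Concurrent S.I k n => hkE h.1)]
          ring
    have hsplit : ∑ k : L, a k * Row k n
        = (Q^2+1) * a n + ∑ k ∈ Pn, a k := by
      have e0 : ∀ k ∈ Finset.univ, a k * Row k n
          = (if k = n then (Q^2+1) * a k else 0)
            + (if S.Ext k ∧ Concurrent S.I k n then a k else 0) := by
        intro k _
        rw [hRowval k, mul_add]
        congr 1
        · by_cases h : k = n
          · rw [if_pos h, if_pos h]; ring
          · rw [if_neg h, if_neg h]; ring
        · by_cases h : S.Ext k ∧ Concurrent S.I k n
          · rw [if_pos h, if_pos h]; ring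
          · rw [if_neg h, if_neg h]; ring
      rw [Finset.sum_congr rfl e0, Finset.sum_add_distrib,
        Finset.sum_ite_eq' Finset.univ n (fun k => (Q^2+1) * a k),
        if_pos (Finset.mem_univ n), ← Finset.sum_filter]
    have hmi1 : ∀ k ∈ Pn, 3*Q * (if k = ℓ then (1:ℚ) else 0)
        = (if k = ℓ then 3*Q else 0) := by
      intro k _; rw [mul_ite, mul_one, mul_zero]
    have hmi2 : ∀ k ∈ Pn, 3*Q * (if k = S.σL ℓ then (1:ℚ) else 0)
        = (if k = S.σL ℓ then 3*Q else 0) := by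
      intro k _; rw [mul_ite, mul_one, mul_zero]
    have hmi3 : ∀ k ∈ Pn, (2*Q-2)/(Q^2+1) * (if S.Ext k then (1:ℚ) else 0)
        = (2*Q-2)/(Q^2+1) := by
      intro k hk
      rw [hPn, Finset.mem_filter] at hk
      rw [if_pos hk.2.1, mul_one]
    have hsumPn : ∑ k ∈ Pn, a k
        = ((if ℓ ∈ Pn then 3*Q else 0) + (if S.σL ℓ ∈ Pn then 3*Q else 0)
           + (Pn.card : ℚ) * ((2*Q-2)/(Q^2+1))
           - ((Pn.filter Spred).card : ℚ)) / D := by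
      simp only [ha]
      rw [← Finset.sum_div]
      congr 1
      rw [Finset.sum_sub_distrib, Finset.sum_add_distrib, Finset.sum_add_distrib,
        Finset.sum_congr rfl hmi1, Finset.sum_congr rfl hmi2,
        Finset.sum_congr rfl hmi3,
        Finset.sum_ite_eq' Pn ℓ (fun _ => 3*Q),
        Finset.sum_ite_eq' Pn (S.σL ℓ) (fun _ => 3*Q),
        Finset.sum_const, nsmul_eq_mul, Finset.sum_boole]
    have hPncard : (Pn.card : ℚ) = (Q - 1)*(Q^2+1) := by
      have hPneq : Pn = Finset.univ.filter (fun m => S.Ext m ∧ Concurrent S.I n m) := by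
        apply Finset.ext
        intro m
        simp only [hPn, Finset.mem_filter, Finset.mem_univ, true_and]
        exact ⟨fun h => ⟨h.1, conc_symm h.2⟩, fun h => ⟨h.1, conc_symm h.2⟩⟩
      rw [hPneq, S.card_perp_ext hnE]
      have h1q : 1 ≤ S.q := by omega
      push_cast [Nat.cast_sub h1q]
      ring
    have hcardS : (Pn.filter Spred).card
        = (if ℓ ∈ Pn then 1 else 0) + (if S.σL ℓ ∈ Pn then 1 else 0)
        + (Finset.univ.filter
            (fun m => S.Ext m ∧ Concurrent S.I ℓ m ∧ Concurrent S.I n m)).card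
        + (Finset.univ.filter
            (fun m => S.Ext m ∧ Concurrent S.I (S.σL ℓ) m ∧ Concurrent S.I n m)).card := by
      exact S.cardS_split ℓ n hl
    rw [hsplit, hsumPn, hPncard]
    by_cases h1 : n = ℓ
    · rw [if_pos (Or.inl h1)]
      have hχ1 : ℓ ∉ Pn := by
        rw [hPn, Finset.mem_filter]
        rintro ⟨-, -, hc⟩
        rw [h1] at hc
        exact hc.1 rfl
      have hχ2 : S.σL ℓ ∉ Pn := by
        rw [hPn, Finset.mem_filter]
        rintro ⟨-, -, hc⟩
        rw [h1] at hc
        exact hnoc' hc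
      have hT3 : (Finset.univ.filter
          (fun m => S.Ext m ∧ Concurrent S.I ℓ m ∧ Concurrent S.I n m)).card
          = (S.q - 1) * (S.q^2 + 1) := by
        have heq : Finset.univ.filter
            (fun m => S.Ext m ∧ Concurrent S.I ℓ m ∧ Concurrent S.I n m)
            = Finset.univ.filter (fun m => S.Ext m ∧ Concurrent S.I ℓ m) := by
          apply Finset.ext
          intro m
          simp only [Finset.mem_filter, Finset.mem_univ, true_and]
          constructor
          · rintro ⟨hE, hc, -⟩; exact ⟨hE, hc⟩
          · rintro ⟨hE, hc⟩; exact ⟨hE, hc, h1 ▸ hc⟩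
        rw [heq]
        exact S.card_perp_ext hl
      have hT4 : (Finset.univ.filter
          (fun m => S.Ext m ∧ Concurrent S.I (S.σL ℓ) m ∧ Concurrent S.I n m)).card
          = 0 := by
        rw [Finset.card_eq_zero]
        apply Finset.eq_empty_of_forall_notMem
        intro m hm
        rw [Finset.mem_filter] at hm
        have hc3 := hm.2.2.2
        rw [h1] at hc3
        exact S.no_common_perp hl hm.2.1 hc3 hm.2.2.1
      have hScard : ((Pn.filter Spred).card : ℚ) = (Q-1)*(Q^2+1) := by
        rw [hcardS, if_neg hχ1, if_neg hχ2, hT3, hT4]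
        have h1q : 1 ≤ S.q := by omega
        push_cast [Nat.cast_sub h1q]
        ring
      have han : a n = (3*Q + (2*Q-2)/(Q^2+1) - 1) / D := by
        simp only [ha, hSpred]
        rw [if_pos h1, if_neg (fun hc : n = S.σL ℓ => hσl (hc.symm.trans h1)),
          if_pos hnE, if_pos (Or.inl h1)]
        ring
      rw [if_neg hχ1, if_neg hχ2, hScard, han]
      field_simp
      ring
    · by_cases h2 : n = S.σL ℓ
      · rw [if_pos (Or.inr h2)]
        have hχ1 : ℓ ∉ Pn := by
          rw [hPn, Finset.mem_filter]
          rintro ⟨-, -, hc⟩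
          rw [h2] at hc
          exact hnoc hc
        have hχ2 : S.σL ℓ ∉ Pn := by
          rw [hPn, Finset.mem_filter]
          rintro ⟨-, -, hc⟩
          rw [h2] at hc
          exact hc.1 rfl
        have hT3 : (Finset.univ.filter
            (fun m => S.Ext m ∧ Concurrent S.I ℓ m ∧ Concurrent S.I n m)).card
            = 0 := by
          rw [Finset.card_eq_zero]
          apply Finset.eq_empty_of_forall_notMem
          intro m hm
          rw [Finset.mem_filter] at hm
          have hc3 := hm.2.2.2
          rw [h2] at hc3
          exact S.no_common_perp hl hm.2.1 hm.2.2.1 hc3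
        have hT4 : (Finset.univ.filter
            (fun m => S.Ext m ∧ Concurrent S.I (S.σL ℓ) m ∧ Concurrent S.I n m)).card
            = (S.q - 1) * (S.q^2 + 1) := by
          have heq : Finset.univ.filter
              (fun m => S.Ext m ∧ Concurrent S.I (S.σL ℓ) m ∧ Concurrent S.I n m)
              = Finset.univ.filter (fun m => S.Ext m ∧ Concurrent S.I (S.σL ℓ) m) := by
            apply Finset.ext
            intro m
            simp only [Finset.mem_filter, Finset.mem_univ, true_and]
            constructor
            · rintro ⟨hE, hc, -⟩; exact ⟨hE, hc⟩
            · rintro ⟨hE, hc⟩; exact ⟨hE, hc, h2 ▸ hc⟩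
          rw [heq]
          exact S.card_perp_ext hlσ
        have hScard : ((Pn.filter Spred).card : ℚ) = (Q-1)*(Q^2+1) := by
          rw [hcardS, if_neg hχ1, if_neg hχ2, hT3, hT4]
          have h1q : 1 ≤ S.q := by omega
          push_cast [Nat.cast_sub h1q]
          ring
        have han : a n = (3*Q + (2*Q-2)/(Q^2+1) - 1) / D := by
          simp only [ha, hSpred]
          rw [if_neg h1, if_pos h2, if_pos hnE, if_pos (Or.inr (Or.inl h2))]
          ring
        rw [if_neg hχ1, if_neg hχ2, hScard, han]
        field_simp
        ring
      · rw [if_neg (by rintro (h | h); exacts [h1 h, h2 h])]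
        by_cases h3 : Concurrent S.I ℓ n
        · have h4 : ¬ Concurrent S.I (S.σL ℓ) n := fun hc =>
            S.no_common_perp hl hnE h3 hc
          have hχ1 : ℓ ∈ Pn := by
            rw [hPn, Finset.mem_filter]
            exact ⟨Finset.mem_univ ℓ, hl, h3⟩
          have hχ2 : S.σL ℓ ∉ Pn := by
            rw [hPn, Finset.mem_filter]
            rintro ⟨-, -, hc⟩
            exact h4 hc
          have hT3 : (Finset.univ.filter
              (fun m => S.Ext m ∧ Concurrent S.I ℓ m ∧ Concurrent S.I n m)).card
              = S.q - 2 := S.ext_perp2_conc hl hnE h3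
          have hT4 : (Finset.univ.filter
              (fun m => S.Ext m ∧ Concurrent S.I (S.σL ℓ) m ∧ Concurrent S.I n m)).card
              = S.q ^ 2 := by
            apply S.ext_perp2_special hlσ hnE h4 h2
            rw [S.hσL2 ℓ]
            exact h3
          have hScard : ((Pn.filter Spred).card : ℚ) = Q^2 + Q - 1 := by
            rw [hcardS, if_pos hχ1, if_neg hχ2, hT3, hT4]
            push_cast [Nat.cast_sub hq2]
            ring
          have han : a n = ((2*Q-2)/(Q^2+1) - 1) / D := by
            simp only [ha, hSpred]
            rw [if_neg h1, if_neg h2, if_pos hnE,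
              if_pos (Or.inr (Or.inr (Or.inl ⟨hnE, h3⟩)))]
            ring
          rw [if_pos hχ1, if_neg hχ2, hScard, han]
          field_simp
          ring
        · by_cases h4 : Concurrent S.I (S.σL ℓ) n
          · have hχ1 : ℓ ∉ Pn := by
              rw [hPn, Finset.mem_filter]
              rintro ⟨-, -, hc⟩
              exact h3 hc
            have hχ2 : S.σL ℓ ∈ Pn := by
              rw [hPn, Finset.mem_filter]
              exact ⟨Finset.mem_univ _, hlσ, h4⟩
            have hT3 : (Finset.univ.filter
                (fun m => S.Ext m ∧ Concurrent S.I ℓ m ∧ Concurrent S.I n m)).card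
                = S.q ^ 2 := S.ext_perp2_special hl hnE h3 h1 h4
            have hT4 : (Finset.univ.filter
                (fun m => S.Ext m ∧ Concurrent S.I (S.σL ℓ) m ∧ Concurrent S.I n m)).card
                = S.q - 2 := S.ext_perp2_conc hlσ hnE h4
            have hScard : ((Pn.filter Spred).card : ℚ) = Q^2 + Q - 1 := by
              rw [hcardS, if_neg hχ1, if_pos hχ2, hT3, hT4]
              push_cast [Nat.cast_sub hq2]
              ring
            have han : a n = ((2*Q-2)/(Q^2+1) - 1) / D := by
              simp only [ha, hSpred]
              rw [if_neg h1, if_neg h2, if_pos hnE,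
                if_pos (Or.inr (Or.inr (Or.inr ⟨hnE, h4⟩)))]
              ring
            rw [if_neg hχ1, if_pos hχ2, hScard, han]
            field_simp
            ring
          · have hχ1 : ℓ ∉ Pn := by
              rw [hPn, Finset.mem_filter]
              rintro ⟨-, -, hc⟩
              exact h3 hc
            have hχ2 : S.σL ℓ ∉ Pn := by
              rw [hPn, Finset.mem_filter]
              rintro ⟨-, -, hc⟩
              exact h4 hc
            have hT3 : (Finset.univ.filter
                (fun m => S.Ext m ∧ Concurrent S.I ℓ m ∧ Concurrent S.I n m)).card
                = S.q ^ 2 - S.q := S.ext_perp2_generic hl h3 h1 h2 h4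
            have hT4 : (Finset.univ.filter
                (fun m => S.Ext m ∧ Concurrent S.I (S.σL ℓ) m ∧ Concurrent S.I n m)).card
                = S.q ^ 2 - S.q := by
              apply S.ext_perp2_generic hlσ h4 h2
              · rw [S.hσL2 ℓ]; exact h1
              · rw [S.hσL2 ℓ]; exact h3
            have hScard : ((Pn.filter Spred).card : ℚ) = 2*(Q^2 - Q) := by
              rw [hcardS, if_neg hχ1, if_neg hχ2, hT3, hT4]
              have hqq : S.q ≤ S.q ^ 2 := by nlinarith
              push_cast [Nat.cast_sub hqq]
              ring
            have han : a n = ((2*Q-2)/(Q^2+1)) / D := by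
              simp only [ha, hSpred]
              rw [if_neg h1, if_neg h2, if_pos hnE, if_neg ?_]
              · ring
              · push_neg
                exact ⟨h1, h2, fun _ => h3, fun _ => h4⟩
            rw [if_neg hχ1, if_neg hχ2, hScard, han]
            field_simp
            ring
  rw [key]
  exact Submodule.sum_mem _ (fun k _ => Submodule.smul_mem _ _
    (Submodule.subset_span ⟨k, rfl⟩))

end Ctx


open scoped Classical in
/-- Let `M` be the Gram-type matrix on external lines with rows
`M_ℓ = (q²+1) χ_ℓ + χ_{ℓ^⊥}` (`ℓ^⊥` the external lines concurrent with `ℓ`; entries of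
`M` outside the external block are zero).  Then for every external line `ℓ` with
antipode `σL ℓ`, the vector `χ_ℓ + χ_{σL ℓ}` lies in the row space of `M` over `ℚ`. -/
theorem statement_19 {P L : Type*} [Fintype P] [Fintype L] {I : P → L → Prop} {q : ℕ}
    (hq : 2 ≤ q)
    (hΓ : GenQuad P L I (q ^ 2) q)
    (P' : Set P) (L' : Set L) (hPne : P'.Nonempty)
    (hPproper : P' ≠ Set.univ) (hLproper : L' ≠ Set.univ)
    (hsub : GenQuad P' L' (fun p l => I p.1 l.1) q q)
    (hlines : ∀ p ∈ P', ∀ l : L, I p l → l ∈ L')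
    (σP : P ≃ P) (σL : L ≃ L)
    (hσI : ∀ (p : P) (l : L), I p l ↔ I (σP p) (σL l))
    (hσP2 : ∀ p, σP (σP p) = p) (hσL2 : ∀ l, σL (σL l) = l)
    (hσfix : ∀ p ∈ P', σP p = p)
    (hσmoveL : ∀ l : L, (∀ p ∈ P', ¬ I p l) → σL l ≠ l)
    (ℓ : L) (hℓ : ∀ p ∈ P', ¬ I p ℓ) :
    (fun n : L => if n = ℓ ∨ n = σL ℓ then (1 : ℚ) else 0) ∈
      Submodule.span ℚ (Set.range fun k : L => fun n : L =>
        if (∀ p ∈ P', ¬ I p k) ∧ (∀ p ∈ P', ¬ I p n) then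
          (if k = n then ((q : ℚ) ^ 2 + 1)
           else if Concurrent I k n then 1 else 0)
        else 0) := by
  classical
  exact Ctx.master ⟨I, q, hq, hΓ, P', L', hPne, hsub, hlines, σP, σL, hσI,
    hσP2, hσL2, hσfix, hσmoveL⟩ hℓ
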